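/- Let c be the unique real root of the polynomial 8t³ + 8t² + 6t + 1. Then arccos(c)/π is irrational. -/

import Mathlib

set_option maxRecDepth 10000

open Polynomial Complex

lemma aux2520 {p k n : ℕ} (hp : p.Prime) (hn : 0 < n) (hpk : p ^ k ∣ n)
    (htot : n.totient ≤ 6) : p ^ k ∣ 2520 := by
  have hd : (p ^ k).totient ∣ n.totient := Nat.totient_dvd_of_dvd hpk
  have h6 : (p ^ k).totient ≤ 6 :=
    le_trans (Nat.le_of_dvd (Nat.totient_pos.mpr hn) hd) htot
  cases k with
  | zero => simp
  | succ k =>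
    rw [Nat.totient_prime_pow_succ hp] at h6
    have hp2 : 2 ≤ p := hp.two_le
    have hpkpos : 0 < p ^ k := Nat.pow_pos (by omega)
    have hle1 : (p - 1) ≤ p ^ k * (p - 1) := Nat.le_mul_of_pos_left _ hpkpos
    have hle2 : p ^ k ≤ p ^ k * (p - 1) := Nat.le_mul_of_pos_right _ (by omega)
    have hple : p ≤ 7 := by omega
    have hpk6 : p ^ k ≤ 6 := by omega
    have hk2 : k ≤ 2 := by
      by_contra hk
      push_neg at hk
      have h1 : (2:ℕ) ^ 3 ≤ 2 ^ k := Nat.pow_le_pow_right (by norm_num) hk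
      have h2 : (2:ℕ) ^ k ≤ p ^ k := Nat.pow_le_pow_left hp2 k
      omega
    interval_cases p <;> interval_cases k <;> revert hp h6 <;> decide

theorem stmt_3 (c : ℝ) (hc : 8 * c ^ 3 + 8 * c ^ 2 + 6 * c + 1 = 0) :
    Irrational (Real.arccos c / Real.pi) := by
  have hm1 : -1 < c := by nlinarith [sq_nonneg c, sq_nonneg (c+1)]
  have h0 : c < 0 := by nlinarith [sq_nonneg c, sq_nonneg (c+1)]
  have hcos : Real.cos (Real.arccos c) = c := Real.cos_arccos (by linarith) (by linarith)
  by_contra hirr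
  obtain ⟨q, hq⟩ := not_not.mp hirr
  have hπ : (Real.pi) ≠ 0 := Real.pi_ne_zero
  have hθ : Real.arccos c = (q : ℝ) * Real.pi := by
    field_simp at hq; linarith [hq]
  set θ : ℝ := Real.arccos c with hθdef
  set z : ℂ := Complex.exp (θ * Complex.I) with hzdef
  have hz0 : z ≠ 0 := Complex.exp_ne_zero _
  -- z ^ (2 * q.den) = 1
  have hzpow : z ^ (2 * q.den) = 1 := by
    rw [hzdef, ← Complex.exp_nat_mul]
    have : ((2 * q.den : ℕ) : ℂ) * (↑θ * Complex.I) = (q.num : ℂ) * (2 * ↑Real.pi * Complex.I) := by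
      have hden : ((q.den : ℝ)) * (q : ℝ) = (q.num : ℝ) := by
        rw [Rat.cast_def]; field_simp
      have hdenC : ((q.den : ℂ)) * ((q : ℝ) : ℂ) = ((q.num : ℤ) : ℂ) := by exact_mod_cast hden
      rw [hθ]
      push_cast
      push_cast at hdenC
      linear_combination (2 * (Real.pi : ℂ) * Complex.I) * hdenC
    rw [this]
    exact Complex.exp_int_mul_two_pi_mul_I q.num
  have hfin : IsOfFinOrder z :=
    isOfFinOrder_iff_pow_eq_one.mpr ⟨2 * q.den, by positivity, hzpow⟩
  set n : ℕ := orderOf z with hndef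
  have hnpos : 0 < n := hfin.orderOf_pos
  have hprim : IsPrimitiveRoot z n := IsPrimitiveRoot.orderOf z
  have hzn : z ^ n = 1 := pow_orderOf_eq_one z
  -- the quadratic relation
  have h2c : z + z⁻¹ = 2 * (c : ℂ) := by
    have h1 : Complex.cos θ = (c : ℂ) := by
      rw [← Complex.ofReal_cos, hcos]
    rw [Complex.cos] at h1
    rw [hzdef, ← Complex.exp_neg]
    rw [show -(↑θ * Complex.I) = -↑θ * Complex.I by ring]
    linear_combination 2 * h1
  have hq2 : z ^ 2 = 2 * (c : ℂ) * z - 1 := by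
    field_simp at h2c
    linear_combination h2c
  have hcC : 8 * (c : ℂ) ^ 3 + 8 * (c : ℂ) ^ 2 + 6 * (c : ℂ) + 1 = 0 := by
    exact_mod_cast congrArg (fun x : ℝ => (x : ℂ)) hc
  -- the polynomial P
  set P : Polynomial ℚ := X ^ 6 + 2 * X ^ 5 + 6 * X ^ 4 + 5 * X ^ 3 + 6 * X ^ 2 + 2 * X + 1
    with hPdef
  have hPz : Polynomial.aeval z P = 0 := by
    rw [hPdef]
    simp only [map_add, map_mul, map_pow, map_ofNat, Polynomial.aeval_X, map_one]
    linear_combination z ^ 3 * hcC + (z ^ 4 + (2 + 2 * (c:ℂ)) * z ^ 3 +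
      (5 + 4 * (c:ℂ) ^ 2 + 4 * (c:ℂ)) * z ^ 2 + (2 + 2 * (c:ℂ)) * z + 1) * hq2
  have hdvd : Polynomial.cyclotomic n ℚ ∣ P := by
    rw [Polynomial.cyclotomic_eq_minpoly_rat hprim hnpos]
    exact minpoly.dvd ℚ z hPz
  have hP6 : P.natDegree = 6 := by
    rw [hPdef]; compute_degree!
  have hP0 : P ≠ 0 := fun h => by simp [h] at hP6
  have htot : n.totient ≤ 6 := by
    have := Polynomial.natDegree_le_of_dvd hdvd hP0
    rwa [Polynomial.natDegree_cyclotomic, hP6] at this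
  have hdvd2520 : n ∣ 2520 := by
    rw [Nat.dvd_iff_prime_pow_dvd_dvd]
    intro p k hp hpk
    exact aux2520 hp hnpos hpk htot
  have hmem : n ∈ Nat.divisors 2520 := Nat.mem_divisors.mpr ⟨hdvd2520, by norm_num⟩
  have key : ∀ m ∈ Nat.divisors 2520, m.totient ≤ 6 →
      m ∈ ({1,2,3,4,5,6,7,8,9,10,12,14,18} : Finset ℕ) := by decide
  have hn18 := key n hmem htot
  clear_value n
  fin_cases hn18
  · -- n = 1
    have hAB : ((1:ℂ)) * z + ((-1:ℂ)) = 0 := by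
      linear_combination hzn - (0:ℂ) * hq2
    have hz2 : ((-1:ℂ) + (2:ℂ)*(c:ℂ)) * z - ((1:ℂ)) = 0 := by
      linear_combination z * hAB - ((1:ℂ)) * hq2
    have hr : ((2:ℂ) + (-2:ℂ)*(c:ℂ)) = 0 := by
      linear_combination ((-1:ℂ) + (2:ℂ)*(c:ℂ)) * hAB - ((1:ℂ)) * hz2
    have h1 : (1:ℂ) = 0 := by
      linear_combination ((1/23:ℂ)) * hcC + ((11/23:ℂ) + (8/23:ℂ)*(c:ℂ) + (4/23:ℂ)*(c:ℂ)^2) * hr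
    exact one_ne_zero h1
  · -- n = 2
    have hAB : ((2:ℂ)*(c:ℂ)) * z + ((-2:ℂ)) = 0 := by
      linear_combination hzn - (((1:ℂ))) * hq2
    have hz2 : ((-2:ℂ) + (4:ℂ)*(c:ℂ)^2) * z - ((2:ℂ)*(c:ℂ)) = 0 := by
      linear_combination z * hAB - ((2:ℂ)*(c:ℂ)) * hq2
    have hr : ((4:ℂ) + (-4:ℂ)*(c:ℂ)^2) = 0 := by
      linear_combination ((-2:ℂ) + (4:ℂ)*(c:ℂ)^2) * hAB - ((2:ℂ)*(c:ℂ)) * hz2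
    have h1 : (1:ℂ) = 0 := by
      linear_combination ((-9/115:ℂ) + (14/115:ℂ)*(c:ℂ)) * hcC + ((31/115:ℂ) + (2/23:ℂ)*(c:ℂ) + (28/115:ℂ)*(c:ℂ)^2) * hr
    exact one_ne_zero h1
  · -- n = 3
    have hAB : ((-1:ℂ) + (4:ℂ)*(c:ℂ)^2) * z + ((-1:ℂ) + (-2:ℂ)*(c:ℂ)) = 0 := by
      linear_combination hzn - (((2:ℂ)*(c:ℂ)) + ((1:ℂ))*z) * hq2
    have hz2 : ((-1:ℂ) + (-4:ℂ)*(c:ℂ) + (8:ℂ)*(c:ℂ)^3) * z - ((-1:ℂ) + (4:ℂ)*(c:ℂ)^2) = 0 := by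
      linear_combination z * hAB - ((-1:ℂ) + (4:ℂ)*(c:ℂ)^2) * hq2
    have hr : ((2:ℂ) + (6:ℂ)*(c:ℂ) + (-8:ℂ)*(c:ℂ)^3) = 0 := by
      linear_combination ((-1:ℂ) + (-4:ℂ)*(c:ℂ) + (8:ℂ)*(c:ℂ)^3) * hAB - ((-1:ℂ) + (4:ℂ)*(c:ℂ)^2) * hz2
    have h1 : (1:ℂ) = 0 := by
      linear_combination ((-51/23:ℂ) + (-20/23:ℂ)*(c:ℂ) + (72/23:ℂ)*(c:ℂ)^2) * hcC + ((37/23:ℂ) + (52/23:ℂ)*(c:ℂ) + (72/23:ℂ)*(c:ℂ)^2) * hr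
    exact one_ne_zero h1
  · -- n = 4
    have hAB : ((-4:ℂ)*(c:ℂ) + (8:ℂ)*(c:ℂ)^3) * z + ((-4:ℂ)*(c:ℂ)^2) = 0 := by
      linear_combination hzn - (((-1:ℂ) + (4:ℂ)*(c:ℂ)^2) + ((2:ℂ)*(c:ℂ))*z + ((1:ℂ))*z^2) * hq2
    have hz2 : ((-12:ℂ)*(c:ℂ)^2 + (16:ℂ)*(c:ℂ)^4) * z - ((-4:ℂ)*(c:ℂ) + (8:ℂ)*(c:ℂ)^3) = 0 := by
      linear_combination z * hAB - ((-4:ℂ)*(c:ℂ) + (8:ℂ)*(c:ℂ)^3) * hq2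
    have hr : ((16:ℂ)*(c:ℂ)^2 + (-16:ℂ)*(c:ℂ)^4) = 0 := by
      linear_combination ((-12:ℂ)*(c:ℂ)^2 + (16:ℂ)*(c:ℂ)^4) * hAB - ((-4:ℂ)*(c:ℂ) + (8:ℂ)*(c:ℂ)^3) * hz2
    have h1 : (1:ℂ) = 0 := by
      linear_combination ((1:ℂ) + (-6:ℂ)*(c:ℂ) + (-124/115:ℂ)*(c:ℂ)^2 + (704/115:ℂ)*(c:ℂ)^3) * hcC + ((209/115:ℂ) + (58/23:ℂ)*(c:ℂ) + (352/115:ℂ)*(c:ℂ)^2) * hr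
    exact one_ne_zero h1
  · -- n = 5
    have hAB : ((1:ℂ) + (-12:ℂ)*(c:ℂ)^2 + (16:ℂ)*(c:ℂ)^4) * z + ((-1:ℂ) + (4:ℂ)*(c:ℂ) + (-8:ℂ)*(c:ℂ)^3) = 0 := by
      linear_combination hzn - (((-4:ℂ)*(c:ℂ) + (8:ℂ)*(c:ℂ)^3) + ((-1:ℂ) + (4:ℂ)*(c:ℂ)^2)*z + ((2:ℂ)*(c:ℂ))*z^2 + ((1:ℂ))*z^3) * hq2
    have hz2 : ((-1:ℂ) + (6:ℂ)*(c:ℂ) + (-32:ℂ)*(c:ℂ)^3 + (32:ℂ)*(c:ℂ)^5) * z - ((1:ℂ) + (-12:ℂ)*(c:ℂ)^2 + (16:ℂ)*(c:ℂ)^4) = 0 := by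
      linear_combination z * hAB - ((1:ℂ) + (-12:ℂ)*(c:ℂ)^2 + (16:ℂ)*(c:ℂ)^4) * hq2
    have hr : ((2:ℂ) + (-10:ℂ)*(c:ℂ) + (40:ℂ)*(c:ℂ)^3 + (-32:ℂ)*(c:ℂ)^5) = 0 := by
      linear_combination ((-1:ℂ) + (6:ℂ)*(c:ℂ) + (-32:ℂ)*(c:ℂ)^3 + (32:ℂ)*(c:ℂ)^5) * hAB - ((1:ℂ) + (-12:ℂ)*(c:ℂ)^2 + (16:ℂ)*(c:ℂ)^4) * hz2
    have h1 : (1:ℂ) = 0 := by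
      linear_combination ((969/2783:ℂ) + (1092/2783:ℂ)*(c:ℂ) + (-6268/2783:ℂ)*(c:ℂ)^2 + (-1240/2783:ℂ)*(c:ℂ)^3 + (5568/2783:ℂ)*(c:ℂ)^4) * hcC + ((907/2783:ℂ) + (1082/2783:ℂ)*(c:ℂ) + (1392/2783:ℂ)*(c:ℂ)^2) * hr
    exact one_ne_zero h1
  · -- n = 6
    have hAB : ((6:ℂ)*(c:ℂ) + (-32:ℂ)*(c:ℂ)^3 + (32:ℂ)*(c:ℂ)^5) * z + ((-2:ℂ) + (12:ℂ)*(c:ℂ)^2 + (-16:ℂ)*(c:ℂ)^4) = 0 := by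
      linear_combination hzn - (((1:ℂ) + (-12:ℂ)*(c:ℂ)^2 + (16:ℂ)*(c:ℂ)^4) + ((-4:ℂ)*(c:ℂ) + (8:ℂ)*(c:ℂ)^3)*z + ((-1:ℂ) + (4:ℂ)*(c:ℂ)^2)*z^2 + ((2:ℂ)*(c:ℂ))*z^3 + ((1:ℂ))*z^4) * hq2
    have hz2 : ((-2:ℂ) + (24:ℂ)*(c:ℂ)^2 + (-80:ℂ)*(c:ℂ)^4 + (64:ℂ)*(c:ℂ)^6) * z - ((6:ℂ)*(c:ℂ) + (-32:ℂ)*(c:ℂ)^3 + (32:ℂ)*(c:ℂ)^5) = 0 := by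
      linear_combination z * hAB - ((6:ℂ)*(c:ℂ) + (-32:ℂ)*(c:ℂ)^3 + (32:ℂ)*(c:ℂ)^5) * hq2
    have hr : ((4:ℂ) + (-36:ℂ)*(c:ℂ)^2 + (96:ℂ)*(c:ℂ)^4 + (-64:ℂ)*(c:ℂ)^6) = 0 := by
      linear_combination ((-2:ℂ) + (24:ℂ)*(c:ℂ)^2 + (-80:ℂ)*(c:ℂ)^4 + (64:ℂ)*(c:ℂ)^6) * hAB - ((6:ℂ)*(c:ℂ) + (-32:ℂ)*(c:ℂ)^3 + (32:ℂ)*(c:ℂ)^5) * hz2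
    have h1 : (1:ℂ) = 0 := by
      linear_combination ((-5569/5635:ℂ) + (18374/5635:ℂ)*(c:ℂ) + (15112/5635:ℂ)*(c:ℂ)^2 + (-57752/5635:ℂ)*(c:ℂ)^3 + (-9984/5635:ℂ)*(c:ℂ)^4 + (40064/5635:ℂ)*(c:ℂ)^5) * hcC + ((2801/5635:ℂ) + (752/1127:ℂ)*(c:ℂ) + (5008/5635:ℂ)*(c:ℂ)^2) * hr
    exact one_ne_zero h1
  · -- n = 7
    have hAB : ((-1:ℂ) + (24:ℂ)*(c:ℂ)^2 + (-80:ℂ)*(c:ℂ)^4 + (64:ℂ)*(c:ℂ)^6) * z + ((-1:ℂ) + (-6:ℂ)*(c:ℂ) + (32:ℂ)*(c:ℂ)^3 + (-32:ℂ)*(c:ℂ)^5) = 0 := by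
      linear_combination hzn - (((6:ℂ)*(c:ℂ) + (-32:ℂ)*(c:ℂ)^3 + (32:ℂ)*(c:ℂ)^5) + ((1:ℂ) + (-12:ℂ)*(c:ℂ)^2 + (16:ℂ)*(c:ℂ)^4)*z + ((-4:ℂ)*(c:ℂ) + (8:ℂ)*(c:ℂ)^3)*z^2 + ((-1:ℂ) + (4:ℂ)*(c:ℂ)^2)*z^3 + ((2:ℂ)*(c:ℂ))*z^4 + ((1:ℂ))*z^5) * hq2
    have hz2 : ((-1:ℂ) + (-8:ℂ)*(c:ℂ) + (80:ℂ)*(c:ℂ)^3 + (-192:ℂ)*(c:ℂ)^5 + (128:ℂ)*(c:ℂ)^7) * z - ((-1:ℂ) + (24:ℂ)*(c:ℂ)^2 + (-80:ℂ)*(c:ℂ)^4 + (64:ℂ)*(c:ℂ)^6) = 0 := by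
      linear_combination z * hAB - ((-1:ℂ) + (24:ℂ)*(c:ℂ)^2 + (-80:ℂ)*(c:ℂ)^4 + (64:ℂ)*(c:ℂ)^6) * hq2
    have hr : ((2:ℂ) + (14:ℂ)*(c:ℂ) + (-112:ℂ)*(c:ℂ)^3 + (224:ℂ)*(c:ℂ)^5 + (-128:ℂ)*(c:ℂ)^7) = 0 := by
      linear_combination ((-1:ℂ) + (-8:ℂ)*(c:ℂ) + (80:ℂ)*(c:ℂ)^3 + (-192:ℂ)*(c:ℂ)^5 + (128:ℂ)*(c:ℂ)^7) * hAB - ((-1:ℂ) + (24:ℂ)*(c:ℂ)^2 + (-80:ℂ)*(c:ℂ)^4 + (64:ℂ)*(c:ℂ)^6) * hz2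
    have h1 : (1:ℂ) = 0 := by
      linear_combination ((-20439/23:ℂ) + (-48236/23:ℂ)*(c:ℂ) + (224268/23:ℂ)*(c:ℂ)^2 + (103208/23:ℂ)*(c:ℂ)^3 + (-479888/23:ℂ)*(c:ℂ)^4 + (-60576/23:ℂ)*(c:ℂ)^5 + (281664/23:ℂ)*(c:ℂ)^6) * hcC + ((10231/23:ℂ) + (13818/23:ℂ)*(c:ℂ) + (17604/23:ℂ)*(c:ℂ)^2) * hr
    exact one_ne_zero h1
  · -- n = 8
    have hAB : ((-8:ℂ)*(c:ℂ) + (80:ℂ)*(c:ℂ)^3 + (-192:ℂ)*(c:ℂ)^5 + (128:ℂ)*(c:ℂ)^7) * z + ((-24:ℂ)*(c:ℂ)^2 + (80:ℂ)*(c:ℂ)^4 + (-64:ℂ)*(c:ℂ)^6) = 0 := by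
      linear_combination hzn - (((-1:ℂ) + (24:ℂ)*(c:ℂ)^2 + (-80:ℂ)*(c:ℂ)^4 + (64:ℂ)*(c:ℂ)^6) + ((6:ℂ)*(c:ℂ) + (-32:ℂ)*(c:ℂ)^3 + (32:ℂ)*(c:ℂ)^5)*z + ((1:ℂ) + (-12:ℂ)*(c:ℂ)^2 + (16:ℂ)*(c:ℂ)^4)*z^2 + ((-4:ℂ)*(c:ℂ) + (8:ℂ)*(c:ℂ)^3)*z^3 + ((-1:ℂ) + (4:ℂ)*(c:ℂ)^2)*z^4 + ((2:ℂ)*(c:ℂ))*z^5 + ((1:ℂ))*z^6) * hq2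
    have hz2 : ((-40:ℂ)*(c:ℂ)^2 + (240:ℂ)*(c:ℂ)^4 + (-448:ℂ)*(c:ℂ)^6 + (256:ℂ)*(c:ℂ)^8) * z - ((-8:ℂ)*(c:ℂ) + (80:ℂ)*(c:ℂ)^3 + (-192:ℂ)*(c:ℂ)^5 + (128:ℂ)*(c:ℂ)^7) = 0 := by
      linear_combination z * hAB - ((-8:ℂ)*(c:ℂ) + (80:ℂ)*(c:ℂ)^3 + (-192:ℂ)*(c:ℂ)^5 + (128:ℂ)*(c:ℂ)^7) * hq2
    have hr : ((64:ℂ)*(c:ℂ)^2 + (-320:ℂ)*(c:ℂ)^4 + (512:ℂ)*(c:ℂ)^6 + (-256:ℂ)*(c:ℂ)^8) = 0 := by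
      linear_combination ((-40:ℂ)*(c:ℂ)^2 + (240:ℂ)*(c:ℂ)^4 + (-448:ℂ)*(c:ℂ)^6 + (256:ℂ)*(c:ℂ)^8) * hAB - ((-8:ℂ)*(c:ℂ) + (80:ℂ)*(c:ℂ)^3 + (-192:ℂ)*(c:ℂ)^5 + (128:ℂ)*(c:ℂ)^7) * hz2
    have h1 : (1:ℂ) = 0 := by
      linear_combination ((1:ℂ) + (-6:ℂ)*(c:ℂ) + (-3932/575:ℂ)*(c:ℂ)^2 + (19712/575:ℂ)*(c:ℂ)^3 + (6896/575:ℂ)*(c:ℂ)^4 + (-33216/575:ℂ)*(c:ℂ)^5 + (-3584/575:ℂ)*(c:ℂ)^6 + (17024/575:ℂ)*(c:ℂ)^7) * hcC + ((313/575:ℂ) + (84/115:ℂ)*(c:ℂ) + (532/575:ℂ)*(c:ℂ)^2) * hr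
    exact one_ne_zero h1
  · -- n = 9
    have hAB : ((1:ℂ) + (-40:ℂ)*(c:ℂ)^2 + (240:ℂ)*(c:ℂ)^4 + (-448:ℂ)*(c:ℂ)^6 + (256:ℂ)*(c:ℂ)^8) * z + ((-1:ℂ) + (8:ℂ)*(c:ℂ) + (-80:ℂ)*(c:ℂ)^3 + (192:ℂ)*(c:ℂ)^5 + (-128:ℂ)*(c:ℂ)^7) = 0 := by
      linear_combination hzn - (((-8:ℂ)*(c:ℂ) + (80:ℂ)*(c:ℂ)^3 + (-192:ℂ)*(c:ℂ)^5 + (128:ℂ)*(c:ℂ)^7) + ((-1:ℂ) + (24:ℂ)*(c:ℂ)^2 + (-80:ℂ)*(c:ℂ)^4 + (64:ℂ)*(c:ℂ)^6)*z + ((6:ℂ)*(c:ℂ) + (-32:ℂ)*(c:ℂ)^3 + (32:ℂ)*(c:ℂ)^5)*z^2 + ((1:ℂ) + (-12:ℂ)*(c:ℂ)^2 + (16:ℂ)*(c:ℂ)^4)*z^3 + ((-4:ℂ)*(c:ℂ) + (8:ℂ)*(c:ℂ)^3)*z^4 + ((-1:ℂ) + (4:ℂ)*(c:ℂ)^2)*z^5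 + ((2:ℂ)*(c:ℂ))*z^6 + ((1:ℂ))*z^7) * hq2
    have hz2 : ((-1:ℂ) + (10:ℂ)*(c:ℂ) + (-160:ℂ)*(c:ℂ)^3 + (672:ℂ)*(c:ℂ)^5 + (-1024:ℂ)*(c:ℂ)^7 + (512:ℂ)*(c:ℂ)^9) * z - ((1:ℂ) + (-40:ℂ)*(c:ℂ)^2 + (240:ℂ)*(c:ℂ)^4 + (-448:ℂ)*(c:ℂ)^6 + (256:ℂ)*(c:ℂ)^8) = 0 := by
      linear_combination z * hAB - ((1:ℂ) + (-40:ℂ)*(c:ℂ)^2 + (240:ℂ)*(c:ℂ)^4 + (-448:ℂ)*(c:ℂ)^6 + (256:ℂ)*(c:ℂ)^8) * hq2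
    have hr : ((2:ℂ) + (-18:ℂ)*(c:ℂ) + (240:ℂ)*(c:ℂ)^3 + (-864:ℂ)*(c:ℂ)^5 + (1152:ℂ)*(c:ℂ)^7 + (-512:ℂ)*(c:ℂ)^9) = 0 := by
      linear_combination ((-1:ℂ) + (10:ℂ)*(c:ℂ) + (-160:ℂ)*(c:ℂ)^3 + (672:ℂ)*(c:ℂ)^5 + (-1024:ℂ)*(c:ℂ)^7 + (512:ℂ)*(c:ℂ)^9) * hAB - ((1:ℂ) + (-40:ℂ)*(c:ℂ)^2 + (240:ℂ)*(c:ℂ)^4 + (-448:ℂ)*(c:ℂ)^6 + (256:ℂ)*(c:ℂ)^8) * hz2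
    have h1 : (1:ℂ) = 0 := by
      linear_combination ((4583/13294:ℂ) + (39213/13294:ℂ)*(c:ℂ) + (-90897/6647:ℂ)*(c:ℂ)^2 + (-84764/6647:ℂ)*(c:ℂ)^3 + (377628/6647:ℂ)*(c:ℂ)^4 + (6968/391:ℂ)*(c:ℂ)^5 + (-31120/391:ℂ)*(c:ℂ)^6 + (-53696/6647:ℂ)*(c:ℂ)^7 + (240704/6647:ℂ)*(c:ℂ)^8) * hcC + ((8711/26588:ℂ) + (2922/6647:ℂ)*(c:ℂ) + (3761/6647:ℂ)*(c:ℂ)^2) * hr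
    exact one_ne_zero h1
  · -- n = 10
    have hAB : ((10:ℂ)*(c:ℂ) + (-160:ℂ)*(c:ℂ)^3 + (672:ℂ)*(c:ℂ)^5 + (-1024:ℂ)*(c:ℂ)^7 + (512:ℂ)*(c:ℂ)^9) * z + ((-2:ℂ) + (40:ℂ)*(c:ℂ)^2 + (-240:ℂ)*(c:ℂ)^4 + (448:ℂ)*(c:ℂ)^6 + (-256:ℂ)*(c:ℂ)^8) = 0 := by
      linear_combination hzn - (((1:ℂ) + (-40:ℂ)*(c:ℂ)^2 + (240:ℂ)*(c:ℂ)^4 + (-448:ℂ)*(c:ℂ)^6 + (256:ℂ)*(c:ℂ)^8) + ((-8:ℂ)*(c:ℂ) + (80:ℂ)*(c:ℂ)^3 + (-192:ℂ)*(c:ℂ)^5 + (128:ℂ)*(c:ℂ)^7)*z + ((-1:ℂ) + (24:ℂ)*(c:ℂ)^2 + (-80:ℂ)*(c:ℂ)^4 + (64:ℂ)*(c:ℂ)^6)*z^2 + ((6:ℂ)*(c:ℂ) + (-32:ℂ)*(c:ℂ)^3 + (32:ℂ)*(c:ℂ)^5)*z^3 + ((1:ℂ) + (-12:ℂ)*(c:ℂ)^2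 + (16:ℂ)*(c:ℂ)^4)*z^4 + ((-4:ℂ)*(c:ℂ) + (8:ℂ)*(c:ℂ)^3)*z^5 + ((-1:ℂ) + (4:ℂ)*(c:ℂ)^2)*z^6 + ((2:ℂ)*(c:ℂ))*z^7 + ((1:ℂ))*z^8) * hq2
    have hz2 : ((-2:ℂ) + (60:ℂ)*(c:ℂ)^2 + (-560:ℂ)*(c:ℂ)^4 + (1792:ℂ)*(c:ℂ)^6 + (-2304:ℂ)*(c:ℂ)^8 + (1024:ℂ)*(c:ℂ)^10) * z - ((10:ℂ)*(c:ℂ) + (-160:ℂ)*(c:ℂ)^3 + (672:ℂ)*(c:ℂ)^5 + (-1024:ℂ)*(c:ℂ)^7 + (512:ℂ)*(c:ℂ)^9) = 0 := by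
      linear_combination z * hAB - ((10:ℂ)*(c:ℂ) + (-160:ℂ)*(c:ℂ)^3 + (672:ℂ)*(c:ℂ)^5 + (-1024:ℂ)*(c:ℂ)^7 + (512:ℂ)*(c:ℂ)^9) * hq2
    have hr : ((4:ℂ) + (-100:ℂ)*(c:ℂ)^2 + (800:ℂ)*(c:ℂ)^4 + (-2240:ℂ)*(c:ℂ)^6 + (2560:ℂ)*(c:ℂ)^8 + (-1024:ℂ)*(c:ℂ)^10) = 0 := by
      linear_combination ((-2:ℂ) + (60:ℂ)*(c:ℂ)^2 + (-560:ℂ)*(c:ℂ)^4 + (1792:ℂ)*(c:ℂ)^6 + (-2304:ℂ)*(c:ℂ)^8 + (1024:ℂ)*(c:ℂ)^10) * hAB - ((10:ℂ)*(c:ℂ) + (-160:ℂ)*(c:ℂ)^3 + (672:ℂ)*(c:ℂ)^5 + (-1024:ℂ)*(c:ℂ)^7 + (512:ℂ)*(c:ℂ)^9) * hz2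
    have h1 : (1:ℂ) = 0 := by
      linear_combination ((-1666289/347875:ℂ) + (7274294/347875:ℂ)*(c:ℂ) + (16569576/347875:ℂ)*(c:ℂ)^2 + (-76195496/347875:ℂ)*(c:ℂ)^3 + (-49683984/347875:ℂ)*(c:ℂ)^4 + (230423264/347875:ℂ)*(c:ℂ)^5 + (58613696/347875:ℂ)*(c:ℂ)^6 + (-272470016/347875:ℂ)*(c:ℂ)^7 + (-23860224/347875:ℂ)*(c:ℂ)^8 + (111010304/347875:ℂ)*(c:ℂ)^9) * hcC + ((503541/347875:ℂ) + (136172/69575:ℂ)*(c:ℂ) + (867268/347875:ℂ)*(c:ℂ)^2) * hr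
    exact one_ne_zero h1
  · -- n = 12
    have hAB : ((-12:ℂ)*(c:ℂ) + (280:ℂ)*(c:ℂ)^3 + (-1792:ℂ)*(c:ℂ)^5 + (4608:ℂ)*(c:ℂ)^7 + (-5120:ℂ)*(c:ℂ)^9 + (2048:ℂ)*(c:ℂ)^11) * z + ((-60:ℂ)*(c:ℂ)^2 + (560:ℂ)*(c:ℂ)^4 + (-1792:ℂ)*(c:ℂ)^6 + (2304:ℂ)*(c:ℂ)^8 + (-1024:ℂ)*(c:ℂ)^10) = 0 := by
      linear_combination hzn - (((-1:ℂ) + (60:ℂ)*(c:ℂ)^2 + (-560:ℂ)*(c:ℂ)^4 + (1792:ℂ)*(c:ℂ)^6 + (-2304:ℂ)*(c:ℂ)^8 + (1024:ℂ)*(c:ℂ)^10) + ((10:ℂ)*(c:ℂ) + (-160:ℂ)*(c:ℂ)^3 + (672:ℂ)*(c:ℂ)^5 + (-1024:ℂ)*(c:ℂ)^7 + (512:ℂ)*(c:ℂ)^9)*z + ((1:ℂ) + (-40:ℂ)*(c:ℂ)^2 + (240:ℂ)*(c:ℂ)^4 + (-448:ℂ)*(c:ℂ)^6 + (256:ℂ)*(c:ℂ)^8)*z^2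 + ((-8:ℂ)*(c:ℂ) + (80:ℂ)*(c:ℂ)^3 + (-192:ℂ)*(c:ℂ)^5 + (128:ℂ)*(c:ℂ)^7)*z^3 + ((-1:ℂ) + (24:ℂ)*(c:ℂ)^2 + (-80:ℂ)*(c:ℂ)^4 + (64:ℂ)*(c:ℂ)^6)*z^4 + ((6:ℂ)*(c:ℂ) + (-32:ℂ)*(c:ℂ)^3 + (32:ℂ)*(c:ℂ)^5)*z^5 + ((1:ℂ) + (-12:ℂ)*(c:ℂ)^2 + (16:ℂ)*(c:ℂ)^4)*z^6 + ((-4:ℂ)*(c:ℂ) + (8:ℂ)*(c:ℂ)^3)*z^7 + ((-1:ℂ) + (4:ℂ)*(c:ℂ)^2)*z^8 + ((2:ℂ)*(c:ℂ))*z^9 + ((1:ℂ))*z^10) * hq2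
    have hz2 : ((-84:ℂ)*(c:ℂ)^2 + (1120:ℂ)*(c:ℂ)^4 + (-5376:ℂ)*(c:ℂ)^6 + (11520:ℂ)*(c:ℂ)^8 + (-11264:ℂ)*(c:ℂ)^10 + (4096:ℂ)*(c:ℂ)^12) * z - ((-12:ℂ)*(c:ℂ) + (280:ℂ)*(c:ℂ)^3 + (-1792:ℂ)*(c:ℂ)^5 + (4608:ℂ)*(c:ℂ)^7 + (-5120:ℂ)*(c:ℂ)^9 + (2048:ℂ)*(c:ℂ)^11) = 0 := by
      linear_combination z * hAB - ((-12:ℂ)*(c:ℂ) + (280:ℂ)*(c:ℂ)^3 + (-1792:ℂ)*(c:ℂ)^5 + (4608:ℂ)*(c:ℂ)^7 + (-5120:ℂ)*(c:ℂ)^9 + (2048:ℂ)*(c:ℂ)^11) * hq2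
    have hr : ((144:ℂ)*(c:ℂ)^2 + (-1680:ℂ)*(c:ℂ)^4 + (7168:ℂ)*(c:ℂ)^6 + (-13824:ℂ)*(c:ℂ)^8 + (12288:ℂ)*(c:ℂ)^10 + (-4096:ℂ)*(c:ℂ)^12) = 0 := by
      linear_combination ((-84:ℂ)*(c:ℂ)^2 + (1120:ℂ)*(c:ℂ)^4 + (-5376:ℂ)*(c:ℂ)^6 + (11520:ℂ)*(c:ℂ)^8 + (-11264:ℂ)*(c:ℂ)^10 + (4096:ℂ)*(c:ℂ)^12) * hAB - ((-12:ℂ)*(c:ℂ) + (280:ℂ)*(c:ℂ)^3 + (-1792:ℂ)*(c:ℂ)^5 + (4608:ℂ)*(c:ℂ)^7 + (-5120:ℂ)*(c:ℂ)^9 + (2048:ℂ)*(c:ℂ)^11) * hz2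
    have h1 : (1:ℂ) = 0 := by
      linear_combination ((1:ℂ) + (-6:ℂ)*(c:ℂ) + (-413806556/19615435:ℂ)*(c:ℂ)^2 + (1968599776/19615435:ℂ)*(c:ℂ)^3 + (2019358144/19615435:ℂ)*(c:ℂ)^4 + (-9401163424/19615435:ℂ)*(c:ℂ)^5 + (-4108912448/19615435:ℂ)*(c:ℂ)^6 + (19053703808/19615435:ℂ)*(c:ℂ)^7 + (3753788928/19615435:ℂ)*(c:ℂ)^8 + (-17390796288/19615435:ℂ)*(c:ℂ)^9 + (-1271578624/19615435:ℂ)*(c:ℂ)^10 + (5889736704/19615435:ℂ)*(c:ℂ)^11) * hcC + ((6687769/19615435:ℂ) + (1803968/3923087:ℂ)*(c:ℂ) + (11503392/19615435:ℂ)*(c:ℂ)^2) * hr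
    exact one_ne_zero h1
  · -- n = 14
    have hAB : ((14:ℂ)*(c:ℂ) + (-448:ℂ)*(c:ℂ)^3 + (4032:ℂ)*(c:ℂ)^5 + (-15360:ℂ)*(c:ℂ)^7 + (28160:ℂ)*(c:ℂ)^9 + (-24576:ℂ)*(c:ℂ)^11 + (8192:ℂ)*(c:ℂ)^13) * z + ((-2:ℂ) + (84:ℂ)*(c:ℂ)^2 + (-1120:ℂ)*(c:ℂ)^4 + (5376:ℂ)*(c:ℂ)^6 + (-11520:ℂ)*(c:ℂ)^8 + (11264:ℂ)*(c:ℂ)^10 + (-4096:ℂ)*(c:ℂ)^12) = 0 := by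
      linear_combination hzn - (((1:ℂ) + (-84:ℂ)*(c:ℂ)^2 + (1120:ℂ)*(c:ℂ)^4 + (-5376:ℂ)*(c:ℂ)^6 + (11520:ℂ)*(c:ℂ)^8 + (-11264:ℂ)*(c:ℂ)^10 + (4096:ℂ)*(c:ℂ)^12) + ((-12:ℂ)*(c:ℂ) + (280:ℂ)*(c:ℂ)^3 + (-1792:ℂ)*(c:ℂ)^5 + (4608:ℂ)*(c:ℂ)^7 + (-5120:ℂ)*(c:ℂ)^9 + (2048:ℂ)*(c:ℂ)^11)*z + ((-1:ℂ) + (60:ℂ)*(c:ℂ)^2 + (-560:ℂ)*(c:ℂ)^4 + (1792:ℂ)*(c:ℂ)^6 + (-2304:ℂ)*(c:ℂ)^8 + (1024:ℂ)*(c:ℂ)^10)*z^2 + ((10:ℂ)*(c:ℂ) + (-160:ℂ)*(c:ℂ)^3 + (672:ℂ)*(c:ℂ)^5 + (-1024:ℂ)*(c:ℂ)^7 + (512:ℂ)*(c:ℂ)^9)*z^3 + ((1:ℂ) + (-40:ℂ)*(c:ℂ)^2 + (240:ℂ)*(c:ℂ)^4 + (-448:ℂ)*(c:ℂ)^6 +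 (256:ℂ)*(c:ℂ)^8)*z^4 + ((-8:ℂ)*(c:ℂ) + (80:ℂ)*(c:ℂ)^3 + (-192:ℂ)*(c:ℂ)^5 + (128:ℂ)*(c:ℂ)^7)*z^5 + ((-1:ℂ) + (24:ℂ)*(c:ℂ)^2 + (-80:ℂ)*(c:ℂ)^4 + (64:ℂ)*(c:ℂ)^6)*z^6 + ((6:ℂ)*(c:ℂ) + (-32:ℂ)*(c:ℂ)^3 + (32:ℂ)*(c:ℂ)^5)*z^7 + ((1:ℂ) + (-12:ℂ)*(c:ℂ)^2 + (16:ℂ)*(c:ℂ)^4)*z^8 + ((-4:ℂ)*(c:ℂ) + (8:ℂ)*(c:ℂ)^3)*z^9 + ((-1:ℂ) + (4:ℂ)*(c:ℂ)^2)*z^10 + ((2:ℂ)*(c:ℂ))*z^11 + ((1:ℂ))*z^12) * hq2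
    have hz2 : ((-2:ℂ) + (112:ℂ)*(c:ℂ)^2 + (-2016:ℂ)*(c:ℂ)^4 + (13440:ℂ)*(c:ℂ)^6 + (-42240:ℂ)*(c:ℂ)^8 + (67584:ℂ)*(c:ℂ)^10 + (-53248:ℂ)*(c:ℂ)^12 + (16384:ℂ)*(c:ℂ)^14) * z - ((14:ℂ)*(c:ℂ) + (-448:ℂ)*(c:ℂ)^3 + (4032:ℂ)*(c:ℂ)^5 + (-15360:ℂ)*(c:ℂ)^7 + (28160:ℂ)*(c:ℂ)^9 + (-24576:ℂ)*(c:ℂ)^11 + (8192:ℂ)*(c:ℂ)^13) = 0 := by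
      linear_combination z * hAB - ((14:ℂ)*(c:ℂ) + (-448:ℂ)*(c:ℂ)^3 + (4032:ℂ)*(c:ℂ)^5 + (-15360:ℂ)*(c:ℂ)^7 + (28160:ℂ)*(c:ℂ)^9 + (-24576:ℂ)*(c:ℂ)^11 + (8192:ℂ)*(c:ℂ)^13) * hq2
    have hr : ((4:ℂ) + (-196:ℂ)*(c:ℂ)^2 + (3136:ℂ)*(c:ℂ)^4 + (-18816:ℂ)*(c:ℂ)^6 + (53760:ℂ)*(c:ℂ)^8 + (-78848:ℂ)*(c:ℂ)^10 + (57344:ℂ)*(c:ℂ)^12 + (-16384:ℂ)*(c:ℂ)^14) = 0 := by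
      linear_combination ((-2:ℂ) + (112:ℂ)*(c:ℂ)^2 + (-2016:ℂ)*(c:ℂ)^4 + (13440:ℂ)*(c:ℂ)^6 + (-42240:ℂ)*(c:ℂ)^8 + (67584:ℂ)*(c:ℂ)^10 + (-53248:ℂ)*(c:ℂ)^12 + (16384:ℂ)*(c:ℂ)^14) * hAB - ((14:ℂ)*(c:ℂ) + (-448:ℂ)*(c:ℂ)^3 + (4032:ℂ)*(c:ℂ)^5 + (-15360:ℂ)*(c:ℂ)^7 + (28160:ℂ)*(c:ℂ)^9 + (-24576:ℂ)*(c:ℂ)^11 + (8192:ℂ)*(c:ℂ)^13) * hz2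
    have h1 : (1:ℂ) = 0 := by
      linear_combination ((-351862569/792235:ℂ) + (1634892174/792235:ℂ)*(c:ℂ) + (9678841672/792235:ℂ)*(c:ℂ)^2 + (-44999408112/792235:ℂ)*(c:ℂ)^3 + (-2924435568/34445:ℂ)*(c:ℂ)^4 + (13596981728/34445:ℂ)*(c:ℂ)^5 + (204871803072/792235:ℂ)*(c:ℂ)^6 + (-952542950912/792235:ℂ)*(c:ℂ)^7 + (-310895967488/792235:ℂ)*(c:ℂ)^8 + (1445498242048/792235:ℂ)*(c:ℂ)^9 + (46155846656/158447:ℂ)*(c:ℂ)^10 + (-214599673856/158447:ℂ)*(c:ℂ)^11 + (-66820091904/792235:ℂ)*(c:ℂ)^12 + (310677110784/792235:ℂ)*(c:ℂ)^13) * hcC + ((88163701/792235:ℂ) + (23814162/158447:ℂ)*(c:ℂ) + (151697808/792235:ℂ)*(c:ℂ)^2) * hr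
    exact one_ne_zero h1
  · -- n = 18
    have hAB : ((18:ℂ)*(c:ℂ) + (-960:ℂ)*(c:ℂ)^3 + (14784:ℂ)*(c:ℂ)^5 + (-101376:ℂ)*(c:ℂ)^7 + (366080:ℂ)*(c:ℂ)^9 + (-745472:ℂ)*(c:ℂ)^11 + (860160:ℂ)*(c:ℂ)^13 + (-524288:ℂ)*(c:ℂ)^15 + (131072:ℂ)*(c:ℂ)^17) * z + ((-2:ℂ) + (144:ℂ)*(c:ℂ)^2 + (-3360:ℂ)*(c:ℂ)^4 + (29568:ℂ)*(c:ℂ)^6 + (-126720:ℂ)*(c:ℂ)^8 + (292864:ℂ)*(c:ℂ)^10 + (-372736:ℂ)*(c:ℂ)^12 + (245760:ℂ)*(c:ℂ)^14 + (-65536:ℂ)*(c:ℂ)^16) = 0 := by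
      linear_combination hzn - (((1:ℂ) + (-144:ℂ)*(c:ℂ)^2 + (3360:ℂ)*(c:ℂ)^4 + (-29568:ℂ)*(c:ℂ)^6 + (126720:ℂ)*(c:ℂ)^8 + (-292864:ℂ)*(c:ℂ)^10 + (372736:ℂ)*(c:ℂ)^12 + (-245760:ℂ)*(c:ℂ)^14 + (65536:ℂ)*(c:ℂ)^16) + ((-16:ℂ)*(c:ℂ) + (672:ℂ)*(c:ℂ)^3 + (-8064:ℂ)*(c:ℂ)^5 + (42240:ℂ)*(c:ℂ)^7 + (-112640:ℂ)*(c:ℂ)^9 + (159744:ℂ)*(c:ℂ)^11 + (-114688:ℂ)*(c:ℂ)^13 + (32768:ℂ)*(c:ℂ)^15)*z + ((-1:ℂ) + (112:ℂ)*(c:ℂ)^2 + (-2016:ℂ)*(c:ℂ)^4 + (13440:ℂ)*(c:ℂ)^6 + (-42240:ℂ)*(c:ℂ)^8 + (67584:ℂ)*(c:ℂ)^10 + (-53248:ℂ)*(c:ℂ)^12 + (16384:ℂ)*(c:ℂ)^14)*z^2 + ((14:ℂ)*(c:ℂ) + (-448:ℂ)*(c:ℂ)^3 + (4032:ℂ)*(c:ℂ)^5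 + (-15360:ℂ)*(c:ℂ)^7 + (28160:ℂ)*(c:ℂ)^9 + (-24576:ℂ)*(c:ℂ)^11 + (8192:ℂ)*(c:ℂ)^13)*z^3 + ((1:ℂ) + (-84:ℂ)*(c:ℂ)^2 + (1120:ℂ)*(c:ℂ)^4 + (-5376:ℂ)*(c:ℂ)^6 + (11520:ℂ)*(c:ℂ)^8 + (-11264:ℂ)*(c:ℂ)^10 + (4096:ℂ)*(c:ℂ)^12)*z^4 + ((-12:ℂ)*(c:ℂ) + (280:ℂ)*(c:ℂ)^3 + (-1792:ℂ)*(c:ℂ)^5 + (4608:ℂ)*(c:ℂ)^7 + (-5120:ℂ)*(c:ℂ)^9 + (2048:ℂ)*(c:ℂ)^11)*z^5 + ((-1:ℂ) + (60:ℂ)*(c:ℂ)^2 + (-560:ℂ)*(c:ℂ)^4 + (1792:ℂ)*(c:ℂ)^6 + (-2304:ℂ)*(c:ℂ)^8 + (1024:ℂ)*(c:ℂ)^10)*z^6 + ((10:ℂ)*(c:ℂ) + (-160:ℂ)*(c:ℂ)^3 + (672:ℂ)*(c:ℂ)^5 + (-1024:ℂ)*(c:ℂ)^7 + (512:ℂ)*(c:ℂ)^9)*z^7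 + ((1:ℂ) + (-40:ℂ)*(c:ℂ)^2 + (240:ℂ)*(c:ℂ)^4 + (-448:ℂ)*(c:ℂ)^6 + (256:ℂ)*(c:ℂ)^8)*z^8 + ((-8:ℂ)*(c:ℂ) + (80:ℂ)*(c:ℂ)^3 + (-192:ℂ)*(c:ℂ)^5 + (128:ℂ)*(c:ℂ)^7)*z^9 + ((-1:ℂ) + (24:ℂ)*(c:ℂ)^2 + (-80:ℂ)*(c:ℂ)^4 + (64:ℂ)*(c:ℂ)^6)*z^10 + ((6:ℂ)*(c:ℂ) + (-32:ℂ)*(c:ℂ)^3 + (32:ℂ)*(c:ℂ)^5)*z^11 + ((1:ℂ) + (-12:ℂ)*(c:ℂ)^2 + (16:ℂ)*(c:ℂ)^4)*z^12 + ((-4:ℂ)*(c:ℂ) + (8:ℂ)*(c:ℂ)^3)*z^13 + ((-1:ℂ) + (4:ℂ)*(c:ℂ)^2)*z^14 + ((2:ℂ)*(c:ℂ))*z^15 + ((1:ℂ))*z^16) * hq2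
    have hz2 : ((-2:ℂ) + (180:ℂ)*(c:ℂ)^2 + (-5280:ℂ)*(c:ℂ)^4 + (59136:ℂ)*(c:ℂ)^6 + (-329472:ℂ)*(c:ℂ)^8 + (1025024:ℂ)*(c:ℂ)^10 + (-1863680:ℂ)*(c:ℂ)^12 + (1966080:ℂ)*(c:ℂ)^14 + (-1114112:ℂ)*(c:ℂ)^16 + (262144:ℂ)*(c:ℂ)^18) * z - ((18:ℂ)*(c:ℂ) + (-960:ℂ)*(c:ℂ)^3 + (14784:ℂ)*(c:ℂ)^5 + (-101376:ℂ)*(c:ℂ)^7 + (366080:ℂ)*(c:ℂ)^9 + (-745472:ℂ)*(c:ℂ)^11 + (860160:ℂ)*(c:ℂ)^13 + (-524288:ℂ)*(c:ℂ)^15 + (131072:ℂ)*(c:ℂ)^17) = 0 := by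
      linear_combination z * hAB - ((18:ℂ)*(c:ℂ) + (-960:ℂ)*(c:ℂ)^3 + (14784:ℂ)*(c:ℂ)^5 + (-101376:ℂ)*(c:ℂ)^7 + (366080:ℂ)*(c:ℂ)^9 + (-745472:ℂ)*(c:ℂ)^11 + (860160:ℂ)*(c:ℂ)^13 + (-524288:ℂ)*(c:ℂ)^15 + (131072:ℂ)*(c:ℂ)^17) * hq2
    have hr : ((4:ℂ) + (-324:ℂ)*(c:ℂ)^2 + (8640:ℂ)*(c:ℂ)^4 + (-88704:ℂ)*(c:ℂ)^6 + (456192:ℂ)*(c:ℂ)^8 + (-1317888:ℂ)*(c:ℂ)^10 + (2236416:ℂ)*(c:ℂ)^12 + (-2211840:ℂ)*(c:ℂ)^14 + (1179648:ℂ)*(c:ℂ)^16 + (-262144:ℂ)*(c:ℂ)^18) = 0 := by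
      linear_combination ((-2:ℂ) + (180:ℂ)*(c:ℂ)^2 + (-5280:ℂ)*(c:ℂ)^4 + (59136:ℂ)*(c:ℂ)^6 + (-329472:ℂ)*(c:ℂ)^8 + (1025024:ℂ)*(c:ℂ)^10 + (-1863680:ℂ)*(c:ℂ)^12 + (1966080:ℂ)*(c:ℂ)^14 + (-1114112:ℂ)*(c:ℂ)^16 + (262144:ℂ)*(c:ℂ)^18) * hAB - ((18:ℂ)*(c:ℂ) + (-960:ℂ)*(c:ℂ)^3 + (14784:ℂ)*(c:ℂ)^5 + (-101376:ℂ)*(c:ℂ)^7 + (366080:ℂ)*(c:ℂ)^9 + (-745472:ℂ)*(c:ℂ)^11 + (860160:ℂ)*(c:ℂ)^13 + (-524288:ℂ)*(c:ℂ)^15 + (131072:ℂ)*(c:ℂ)^17) * hz2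
    have h1 : (1:ℂ) = 0 := by
      linear_combination ((-53435741/6514060:ℂ) + (59912159/1628515:ℂ)*(c:ℂ) + (106925043/186116:ℂ)*(c:ℂ)^2 + (-124183797/46529:ℂ)*(c:ℂ)^3 + (-2433905564/325703:ℂ)*(c:ℂ)^4 + (11316467934/325703:ℂ)*(c:ℂ)^5 + (69293540924/1628515:ℂ)*(c:ℂ)^6 + (-322189289704/1628515:ℂ)*(c:ℂ)^7 + (-211288183168/1628515:ℂ)*(c:ℂ)^8 + (982397914528/1628515:ℂ)*(c:ℂ)^9 + (3220193728/14161:ℂ)*(c:ℂ)^10 + (-14972345088/14161:ℂ)*(c:ℂ)^11 + (-374005056256/1628515:ℂ)*(c:ℂ)^12 + (1738932530176/1628515:ℂ)*(c:ℂ)^13 + (202360853504/1628515:ℂ)*(c:ℂ)^14 + (-940871337984/1628515:ℂ)*(c:ℂ)^15 + (-45436268544/1628515:ℂ)*(c:ℂ)^16 + (211254247424/1628515:ℂ)*(c:ℂ)^17) * hcC + ((59949801/26056240:ℂ) + (8096581/2605624:ℂ)*(c:ℂ) + (6446968/1628515:ℂ)*(c:ℂ)^2) * hr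
    exact one_ne_zero h1
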